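/- Let A : ℝⁿ → Matrix (Fin n) (Fin n) ℝ be continuous, and let x : [t₀, T] → ℝⁿ be a solution of ẋ = A(x)x. For a partition t₀ < t₁ < ⋯ < t_k = T define the Euler-exponential approximation by y₀ = x(t₀), y_{i+1} = e^{A(y_i)(t_{i+1}−t_i)} y_i. Then as the mesh max_i (t_i − t_{i−1}) → 0, the piecewise-defined approximation converges to x uniformly on [t₀, T]. -/

import Mathlib

open Matrix Filter Set

section Aux

open Metric NormedSpace

lemma locallyLipschitz_lipschitzOn_compact {E F : Type*} [MetricSpace E] [MetricSpace F]
    {f : E → F} (hf : LocallyLipschitz f) {s : Set E} (hs : IsCompact s) :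
    ∃ L : ℝ, 0 ≤ L ∧ ∀ z ∈ s, ∀ w ∈ s, dist (f z) (f w) ≤ L * dist z w := by
  rcases s.eq_empty_or_nonempty with rfl | ⟨z₀, hz₀⟩
  · exact ⟨0, le_rfl, by simp⟩
  have h : ∀ x : E, ∃ r : ℝ, 0 < r ∧ ∃ K : NNReal, LipschitzOnWith K f (ball x r) := by
    intro x
    obtain ⟨K, t, ht, hK⟩ := hf x
    obtain ⟨r, hr, hball⟩ := Metric.mem_nhds_iff.1 ht
    exact ⟨r, hr, K, hK.mono hball⟩
  choose r hr K hK using h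
  obtain ⟨T, hT⟩ := hs.elim_finite_subcover (fun x : E => ball x (r x / 2))
    (fun x => isOpen_ball) (fun z hz => mem_iUnion.2 ⟨z, mem_ball_self (by linarith [hr z])⟩)
  have hTne : T.Nonempty := by
    obtain ⟨x, hx⟩ := mem_iUnion.1 (hT hz₀)
    obtain ⟨hx1, _⟩ := mem_iUnion.1 hx
    exact ⟨x, hx1⟩
  set ρ : ℝ := T.inf' hTne (fun x => r x / 2) with hρdef
  have hρpos : 0 < ρ := by
    rw [hρdef, Finset.lt_inf'_iff]
    exact fun x _ => by linarith [hr x]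
  set L₀ : ℝ := T.sup' hTne (fun x => (K x : ℝ)) with hL₀def
  have hL₀ : 0 ≤ L₀ := by
    obtain ⟨x, hx⟩ := hTne
    exact le_trans (K x).coe_nonneg (Finset.le_sup' (fun x => (K x : ℝ)) hx)
  obtain ⟨D, hD⟩ := Metric.isBounded_iff.1 (hs.image hf.continuous).isBounded
  have hDnn : 0 ≤ D := by
    have := hD (mem_image_of_mem f hz₀) (mem_image_of_mem f hz₀)
    simpa using this
  refine ⟨max L₀ (D / ρ), le_trans hL₀ (le_max_left _ _), fun z hz w hw => ?_⟩
  rcases le_or_gt (dist z w) ρ with hle | hlt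
  · obtain ⟨x, hx⟩ := mem_iUnion.1 (hT hz)
    obtain ⟨hxT, hzx⟩ := mem_iUnion.1 hx
    have hρx : ρ ≤ r x / 2 := Finset.inf'_le _ hxT
    have hzball : z ∈ ball x (r x) := by
      rw [mem_ball] at hzx ⊢; linarith [hr x]
    have hwball : w ∈ ball x (r x) := by
      rw [mem_ball] at hzx ⊢
      calc dist w x ≤ dist w z + dist z x := dist_triangle _ _ _
        _ < ρ + r x / 2 := by rw [dist_comm w z]; exact add_lt_add_of_le_of_lt hle hzx
        _ ≤ r x := by linarith
    calc dist (f z) (f w) ≤ (K x : ℝ) * dist z w := (hK x).dist_le_mul z hzball w hwball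
      _ ≤ L₀ * dist z w :=
          mul_le_mul_of_nonneg_right (Finset.le_sup' (fun x => (K x : ℝ)) hxT) dist_nonneg
      _ ≤ max L₀ (D / ρ) * dist z w :=
          mul_le_mul_of_nonneg_right (le_max_left _ _) dist_nonneg
  · calc dist (f z) (f w) ≤ D := hD (mem_image_of_mem f hz) (mem_image_of_mem f hw)
      _ = (D / ρ) * ρ := by field_simp
      _ ≤ (D / ρ) * dist z w :=
          mul_le_mul_of_nonneg_left hlt.le (div_nonneg hDnn hρpos.le)
      _ ≤ max L₀ (D / ρ) * dist z w :=
          mul_le_mul_of_nonneg_right (le_max_right _ _) dist_nonneg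

attribute [local instance] Matrix.linftyOpNormedAddCommGroup in
lemma matrix_norm_le_sum {n : ℕ} (M : Matrix (Fin n) (Fin n) ℝ) :
    ‖M‖ ≤ ∑ i, ∑ j, ‖M i j‖ := by
  rw [Matrix.linfty_opNorm_def]
  have h : (Finset.univ.sup fun i => ∑ j, ‖M i j‖₊) ≤ ∑ i, ∑ j, ‖M i j‖₊ :=
    Finset.sup_le fun i _ =>
      Finset.single_le_sum (f := fun i => ∑ j, ‖M i j‖₊) (fun _ _ => zero_le)
        (Finset.mem_univ i)
  calc ((Finset.univ.sup fun i => ∑ j, ‖M i j‖₊ : NNReal) : ℝ)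
      ≤ ((∑ i, ∑ j, ‖M i j‖₊ : NNReal) : ℝ) := by exact_mod_cast h
    _ = ∑ i, ∑ j, ‖M i j‖ := by push_cast; rfl

noncomputable def mulVecCLM {n : ℕ} (v : Fin n → ℝ) :
    Matrix (Fin n) (Fin n) ℝ →L[ℝ] (Fin n → ℝ) :=
  LinearMap.toContinuousLinearMap
    { toFun := fun M => M *ᵥ v
      map_add' := fun M N => Matrix.add_mulVec M N v
      map_smul' := fun c M => by simp [Matrix.smul_mulVec] }

lemma mulVec_exp_hasDerivAt {n : ℕ} (Ai : Matrix (Fin n) (Fin n) ℝ) (v : Fin n → ℝ) (a s : ℝ) :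
    HasDerivAt (fun s : ℝ => exp ((s - a) • Ai) *ᵥ v)
      (Ai *ᵥ (exp ((s - a) • Ai) *ᵥ v)) s := by
  letI : NormedRing (Matrix (Fin n) (Fin n) ℝ) := Matrix.linftyOpNormedRing
  letI : NormedAlgebra ℝ (Matrix (Fin n) (Fin n) ℝ) := Matrix.linftyOpNormedAlgebra
  letI : CompleteSpace (Matrix (Fin n) (Fin n) ℝ) := FiniteDimensional.complete ℝ _
  have h1 : HasDerivAt (fun u : ℝ => exp (u • Ai)) (Ai * exp ((s - a) • Ai)) (s - a) :=
    hasDerivAt_exp_smul_const' Ai (s - a)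
  have h2 : HasDerivAt (fun s : ℝ => s - a) 1 s := (hasDerivAt_id s).sub_const a
  have h3 := h1.scomp s h2
  have h4 := (mulVecCLM v).hasFDerivAt.comp_hasDerivAt s h3
  rw [one_smul] at h4; rw [Matrix.mulVec_mulVec]; exact h4

lemma exp_sub_one_le_self_mul_exp (u : ℝ) : Real.exp u - 1 ≤ u * Real.exp u := by
  have h2 := Real.add_one_le_exp (-u)
  have h3 : Real.exp (-u) * Real.exp u = 1 := by rw [← Real.exp_add]; simp
  nlinarith [Real.exp_pos u]

lemma gronwallBound_le_aux {δ0 Kc ε₀ h : ℝ} (hK : 0 < Kc) (hε : 0 ≤ ε₀) :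
    gronwallBound δ0 Kc ε₀ h ≤ (δ0 + ε₀ * h) * Real.exp (Kc * h) := by
  rw [gronwallBound_of_K_ne_0 hK.ne']
  have hu : Real.exp (Kc * h) - 1 ≤ (Kc * h) * Real.exp (Kc * h) :=
    exp_sub_one_le_self_mul_exp (Kc * h)
  have h1 : ε₀ / Kc * (Real.exp (Kc * h) - 1) ≤ ε₀ * h * Real.exp (Kc * h) := by
    calc ε₀ / Kc * (Real.exp (Kc * h) - 1)
        ≤ ε₀ / Kc * ((Kc * h) * Real.exp (Kc * h)) :=
          mul_le_mul_of_nonneg_left hu (div_nonneg hε hK.le)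
      _ = ε₀ * h * Real.exp (Kc * h) := by field_simp
  have h2 : (δ0 + ε₀ * h) * Real.exp (Kc * h)
      = δ0 * Real.exp (Kc * h) + ε₀ * h * Real.exp (Kc * h) := by ring
  rw [h2]
  linarith

lemma step_algebra {ei LC w h M Q : ℝ} (hei : 0 ≤ ei) (hLC : 0 ≤ LC) (hw : 0 ≤ w)
    (hh : 0 ≤ h) (hQ : Q = M + LC) (hM : 0 ≤ M) :
    (ei + LC * (ei + w) * h) * Real.exp (M * h)
      ≤ ei * Real.exp (Q * h) + LC * w * h * Real.exp (Q * h) := by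
  have h1 : 1 + LC * h ≤ Real.exp (LC * h) := by
    have := Real.add_one_le_exp (LC * h); linarith
  have h2 : Real.exp (M * h) * Real.exp (LC * h) = Real.exp (Q * h) := by
    rw [← Real.exp_add, hQ]; ring_nf
  have h3 : Real.exp (M * h) ≤ Real.exp (Q * h) := by
    rw [Real.exp_le_exp, hQ]; nlinarith
  have key : (ei + LC * (ei + w) * h) * Real.exp (M * h)
      = ei * (1 + LC * h) * Real.exp (M * h) + LC * w * h * Real.exp (M * h) := by ring
  rw [key]
  have h4 : ei * (1 + LC * h) * Real.exp (M * h) ≤ ei * Real.exp (Q * h) := by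
    calc ei * (1 + LC * h) * Real.exp (M * h)
        ≤ ei * Real.exp (LC * h) * Real.exp (M * h) := by
          have := mul_le_mul_of_nonneg_left h1 hei
          exact mul_le_mul_of_nonneg_right this (Real.exp_pos _).le
      _ = ei * Real.exp (Q * h) := by rw [mul_assoc, mul_comm (Real.exp (LC * h)), h2]
  have h5 : LC * w * h * Real.exp (M * h) ≤ LC * w * h * Real.exp (Q * h) :=
    mul_le_mul_of_nonneg_left h3 (by positivity)
  linarith

lemma chain_bound {ei P Q t0 ta s : ℝ} (hP : 0 ≤ P) (hQ : 0 < Q) (ht0 : t0 ≤ ta) (hs : ta ≤ s)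
    (hei : ei ≤ P * (ta - t0) * Real.exp (Q * (ta - t0))) :
    ei * Real.exp (Q * (s - ta)) + P * (s - ta) * Real.exp (Q * (s - ta))
      ≤ P * (s - t0) * Real.exp (Q * (s - t0)) := by
  have h1 : Real.exp (Q * (ta - t0)) * Real.exp (Q * (s - ta)) = Real.exp (Q * (s - t0)) := by
    rw [← Real.exp_add]; ring_nf
  have h2 : Real.exp (Q * (s - ta)) ≤ Real.exp (Q * (s - t0)) := by
    rw [Real.exp_le_exp]; nlinarith
  calc ei * Real.exp (Q * (s - ta)) + P * (s - ta) * Real.exp (Q * (s - ta))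
      ≤ (P * (ta - t0) * Real.exp (Q * (ta - t0))) * Real.exp (Q * (s - ta))
          + P * (s - ta) * Real.exp (Q * (s - t0)) := by
        have hA := mul_le_mul_of_nonneg_right hei (Real.exp_pos (Q * (s - ta))).le
        have hB := mul_le_mul_of_nonneg_left h2
          (mul_nonneg hP (sub_nonneg.2 hs))
        linarith
    _ = P * (ta - t0) * Real.exp (Q * (s - t0)) + P * (s - ta) * Real.exp (Q * (s - t0)) := by
        rw [mul_assoc, h1]
    _ = P * (s - t0) * Real.exp (Q * (s - t0)) := by ring

end Aux

/-- Convergence of the Euler-exponential approximations: if `x` solves `ẋ = A(x)x` on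
`[t₀, T]` with `A` continuous (and locally Lipschitz), then for every `ε > 0` there is a
mesh size `δ > 0` such that for every partition of `[t₀, T]` with mesh `< δ`, the
piecewise-exponential approximation stays within `ε` of `x` on all of `[t₀, T]`. -/
theorem euler_exponential_approximation_converges (n : ℕ)
    (A : (Fin n → ℝ) → Matrix (Fin n) (Fin n) ℝ)
    (hAc : Continuous A) (hAl : ∀ i j, LocallyLipschitz fun z => A z i j)
    (t₀ T : ℝ) (hT : t₀ < T)
    (x : ℝ → (Fin n → ℝ))
    (hx : ∀ t ∈ Icc t₀ T, HasDerivAt x (A (x t) *ᵥ x t) t) :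
    ∀ ε > (0 : ℝ), ∃ δ > (0 : ℝ),
      ∀ (k : ℕ) (t : Fin (k + 1) → ℝ), StrictMono t →
        t 0 = t₀ → t (Fin.last k) = T →
        (∀ i : Fin k, t i.succ - t i.castSucc < δ) →
        ∀ y : Fin (k + 1) → (Fin n → ℝ), y 0 = x t₀ →
          (∀ i : Fin k, y i.succ =
            NormedSpace.exp ((t i.succ - t i.castSucc) • A (y i.castSucc))
              *ᵥ y i.castSucc) →
          ∀ i : Fin k, ∀ s ∈ Icc (t i.castSucc) (t i.succ),
            ‖NormedSpace.exp ((s - t i.castSucc) • A (y i.castSucc))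
                *ᵥ y i.castSucc - x s‖ < ε := by
  intro ε hε
  letI : NormedRing (Matrix (Fin n) (Fin n) ℝ) := Matrix.linftyOpNormedRing
  letI : NormedAlgebra ℝ (Matrix (Fin n) (Fin n) ℝ) := Matrix.linftyOpNormedAlgebra
  letI : CompleteSpace (Matrix (Fin n) (Fin n) ℝ) := FiniteDimensional.complete ℝ _
  have hTt : (0:ℝ) < T - t₀ := sub_pos.2 hT
  have hxc : ContinuousOn x (Icc t₀ T) := fun s hs => (hx s hs).continuousAt.continuousWithinAt
  have hKcp : IsCompact (x '' Icc t₀ T) := isCompact_Icc.image_of_continuousOn hxc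
  set K₁ : Set (Fin n → ℝ) := Metric.cthickening 1 (x '' Icc t₀ T) with hK₁def
  have hK₁cp : IsCompact K₁ := hKcp.cthickening
  -- bound on ‖x s‖
  obtain ⟨C₀, hC₀⟩ := isCompact_Icc.exists_bound_of_continuousOn hxc
  set C : ℝ := max C₀ 0 with hCdef
  have hC : ∀ s ∈ Icc t₀ T, ‖x s‖ ≤ C := fun s hs => (hC₀ s hs).trans (le_max_left _ _)
  have hC0 : (0:ℝ) ≤ C := le_max_right _ _
  -- bound on ‖A z‖
  obtain ⟨M₀, hM₀⟩ := hK₁cp.exists_bound_of_continuousOn hAc.continuousOn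
  set M : ℝ := max M₀ 1 with hMdef
  have hM : ∀ z ∈ K₁, ‖A z‖ ≤ M := fun z hz => (hM₀ z hz).trans (le_max_left _ _)
  have hM1 : (1:ℝ) ≤ M := le_max_right _ _
  -- Lipschitz constant of A on K₁
  have hLex : ∀ p : Fin n × Fin n, ∃ L : ℝ, 0 ≤ L ∧ ∀ z ∈ K₁, ∀ w ∈ K₁,
      dist (A z p.1 p.2) (A w p.1 p.2) ≤ L * dist z w :=
    fun p => locallyLipschitz_lipschitzOn_compact (hAl p.1 p.2) hK₁cp
  choose Lf hLf0 hLf using hLex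
  set L : ℝ := ∑ p : Fin n × Fin n, Lf p with hLdef
  have hL0 : 0 ≤ L := Finset.sum_nonneg fun p _ => hLf0 p
  have hL : ∀ z ∈ K₁, ∀ w ∈ K₁, ‖A z - A w‖ ≤ L * ‖z - w‖ := by
    intro z hz w hw
    calc ‖A z - A w‖ ≤ ∑ i, ∑ j, ‖(A z - A w) i j‖ := matrix_norm_le_sum _
      _ ≤ ∑ i, ∑ j, Lf (i, j) * dist z w := by
          refine Finset.sum_le_sum fun i _ => Finset.sum_le_sum fun j _ => ?_
          simpa [Matrix.sub_apply, dist_eq_norm] using hLf (i, j) z hz w hw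
      _ = (∑ i, ∑ j, Lf (i, j)) * dist z w := by
          simp [Finset.sum_mul]
      _ = L * ‖z - w‖ := by
          rw [hLdef, ← Finset.univ_product_univ, Finset.sum_product, dist_eq_norm]
  set Q : ℝ := M + L * C with hQdef
  have hQpos : 0 < Q := by nlinarith
  set Eb : ℝ := Real.exp (Q * (T - t₀)) with hEdef
  have hEbpos : 0 < Eb := Real.exp_pos _
  set w : ℝ := min ((min ε 1) / (2 * (L * C + 1) * (T - t₀) * Eb)) 1 with hwdef
  have hLC1 : (0:ℝ) < 2 * (L * C + 1) := by nlinarith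
  have hden : (0:ℝ) < 2 * (L * C + 1) * (T - t₀) * Eb :=
    mul_pos (mul_pos hLC1 hTt) hEbpos
  have hw0 : 0 < w := lt_min (div_pos (lt_min hε one_pos) hden) one_pos
  have hsmall : L * C * w * (T - t₀) * Eb ≤ min ε 1 / 2 := by
    have h1 : w ≤ (min ε 1) / (2 * (L * C + 1) * (T - t₀) * Eb) := min_le_left _ _
    have h2 : w * (2 * (L * C + 1) * (T - t₀) * Eb) ≤ min ε 1 := by
      rw [← le_div_iff₀ hden]; exact h1
    nlinarith [mul_nonneg (mul_nonneg hw0.le hTt.le) hEbpos.le]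
  obtain ⟨δ, hδ0, hδ⟩ := (Metric.uniformContinuousOn_iff_le.1
    (isCompact_Icc.uniformContinuousOn_of_continuous hxc)) w hw0
  refine ⟨δ, hδ0, ?_⟩
  intro k t htm ht0 htT hmesh y hy0 hyrec
  have htmem : ∀ i : Fin (k+1), t i ∈ Icc t₀ T := fun i =>
    ⟨by rw [← ht0]; exact htm.monotone (Fin.zero_le i),
     by rw [← htT]; exact htm.monotone (Fin.le_last i)⟩
  have hLCw : (0:ℝ) ≤ L * C * w := mul_nonneg (mul_nonneg hL0 hC0) hw0.le
  have hmono : ∀ τ, τ ∈ Icc t₀ T →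
      L * C * w * (τ - t₀) * Real.exp (Q * (τ - t₀)) ≤ min ε 1 / 2 := by
    intro τ hτ
    have h1 : L * C * w * (τ - t₀) ≤ L * C * w * (T - t₀) :=
      mul_le_mul_of_nonneg_left (by linarith [hτ.2]) hLCw
    have h2 : Real.exp (Q * (τ - t₀)) ≤ Eb := by
      rw [hEdef, Real.exp_le_exp]
      exact mul_le_mul_of_nonneg_left (by linarith [hτ.2]) hQpos.le
    calc L * C * w * (τ - t₀) * Real.exp (Q * (τ - t₀))
        ≤ L * C * w * (T - t₀) * Eb :=
          mul_le_mul h1 h2 (Real.exp_pos _).le (mul_nonneg hLCw hTt.le)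
      _ ≤ min ε 1 / 2 := hsmall
  have key : ∀ i : Fin k,
      ‖y i.castSucc - x (t i.castSucc)‖
        ≤ L * C * w * (t i.castSucc - t₀) * Real.exp (Q * (t i.castSucc - t₀)) →
      ∀ s ∈ Icc (t i.castSucc) (t i.succ),
        ‖NormedSpace.exp ((s - t i.castSucc) • A (y i.castSucc)) *ᵥ y i.castSucc - x s‖
          ≤ L * C * w * (s - t₀) * Real.exp (Q * (s - t₀)) := by
    intro i ih s hs
    set a := t i.castSucc with hadef
    set b := t i.succ with hbdef
    set yi := y i.castSucc with hyidef
    set Ai := A yi with hAidef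
    set ei := ‖yi - x a‖ with heidef
    have hab : a < b := htm (Fin.castSucc_lt_succ (i := i))
    have haT : a ∈ Icc t₀ T := htmem _
    have hbT : b ∈ Icc t₀ T := htmem _
    have hIccsub : Icc a b ⊆ Icc t₀ T := Icc_subset_Icc haT.1 hbT.2
    have hei0 : 0 ≤ ei := norm_nonneg _
    have hmin1 : min ε 1 / 2 ≤ 1 := by have := min_le_right ε 1; linarith
    have hei1 : ei ≤ 1 := le_trans (ih.trans (hmono a haT)) hmin1
    have hxaK : x a ∈ x '' Icc t₀ T := mem_image_of_mem x haT
    have hyiK : yi ∈ K₁ :=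
      Metric.mem_cthickening_of_dist_le yi (x a) 1 _ hxaK (by rw [dist_eq_norm]; exact hei1)
    have hAiM : ‖Ai‖ ≤ M := hM yi hyiK
    set z : ℝ → (Fin n → ℝ) := fun s => NormedSpace.exp ((s - a) • Ai) *ᵥ yi with hzdef
    have hz : ∀ u : ℝ, HasDerivAt z (Ai *ᵥ z u) u := fun u => mulVec_exp_hasDerivAt Ai yi a u
    have hza : z a = yi := by
      rw [hzdef]; simp [NormedSpace.exp_zero, Matrix.one_mulVec]
    have hzc : ContinuousOn z (Icc a b) := fun u _ => (hz u).continuousAt.continuousWithinAt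
    have hcont : ContinuousOn (fun u => z u - x u) (Icc a b) := hzc.sub (hxc.mono hIccsub)
    have hderiv : ∀ u ∈ Ico a b, HasDerivWithinAt (fun s => z s - x s)
        (Ai *ᵥ z u - A (x u) *ᵥ x u) (Ici u) u := fun u hu =>
      ((hz u).sub (hx u (hIccsub (Ico_subset_Icc_self hu)))).hasDerivWithinAt
    have hinit : ‖z a - x a‖ ≤ ei := by rw [hza]
    have hbound : ∀ u ∈ Ico a b, ‖Ai *ᵥ z u - A (x u) *ᵥ x u‖
        ≤ M * ‖z u - x u‖ + L * C * (ei + w) := by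
      intro u hu
      have huT : u ∈ Icc t₀ T := hIccsub (Ico_subset_Icc_self hu)
      have hxuK : x u ∈ K₁ := Metric.self_subset_cthickening _ (mem_image_of_mem x huT)
      have hxuC : ‖x u‖ ≤ C := hC u huT
      have hdau : dist a u ≤ δ := by
        rw [Real.dist_eq, abs_of_nonpos (by linarith [hu.1] : a - u ≤ 0)]
        have h1 := hmesh i
        have h2 := hu.2
        rw [← hadef, ← hbdef] at h1
        linarith
      have hxau : ‖x a - x u‖ ≤ w := by
        have := hδ a haT u huT hdau
        rwa [dist_eq_norm] at this
      have hyixu : ‖yi - x u‖ ≤ ei + w := by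
        have h3 : dist yi (x u) ≤ dist yi (x a) + dist (x a) (x u) := dist_triangle _ _ _
        rw [dist_eq_norm, dist_eq_norm, dist_eq_norm] at h3
        rw [← heidef] at h3
        linarith
      have hALip : ‖Ai - A (x u)‖ ≤ L * (ei + w) :=
        le_trans (hL yi hyiK (x u) hxuK) (mul_le_mul_of_nonneg_left hyixu hL0)
      have hrw : Ai *ᵥ z u - A (x u) *ᵥ x u
          = Ai *ᵥ (z u - x u) + (Ai - A (x u)) *ᵥ x u := by
        rw [Matrix.mulVec_sub, Matrix.sub_mulVec]; abel
      rw [hrw]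
      calc ‖Ai *ᵥ (z u - x u) + (Ai - A (x u)) *ᵥ x u‖
          ≤ ‖Ai *ᵥ (z u - x u)‖ + ‖(Ai - A (x u)) *ᵥ x u‖ := norm_add_le _ _
        _ ≤ ‖Ai‖ * ‖z u - x u‖ + ‖Ai - A (x u)‖ * ‖x u‖ :=
            add_le_add (Matrix.linfty_opNorm_mulVec _ _) (Matrix.linfty_opNorm_mulVec _ _)
        _ ≤ M * ‖z u - x u‖ + (L * (ei + w)) * C := add_le_add
            (mul_le_mul_of_nonneg_right hAiM (norm_nonneg _))
            (mul_le_mul hALip hxuC (norm_nonneg _) (mul_nonneg hL0 (by linarith)))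
        _ = M * ‖z u - x u‖ + L * C * (ei + w) := by ring
    have hgron := norm_le_gronwallBound_of_norm_deriv_right_le
      hcont hderiv hinit hbound s hs
    have hMpos : (0:ℝ) < M := by linarith
    have hs0 : (0:ℝ) ≤ s - a := by linarith [hs.1]
    have hstep : gronwallBound ei M (L * C * (ei + w)) (s - a)
        ≤ (ei + L * C * (ei + w) * (s - a)) * Real.exp (M * (s - a)) :=
      gronwallBound_le_aux hMpos (mul_nonneg (mul_nonneg hL0 hC0) (by linarith))
    have halg := step_algebra (ei := ei) (LC := L * C) (w := w) (h := s - a)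
      (M := M) (Q := Q) hei0 (mul_nonneg hL0 hC0) hw0.le hs0 hQdef hMpos.le
    have hchain := chain_bound (ei := ei) (P := L * C * w) (Q := Q) (t0 := t₀)
      (ta := a) (s := s) hLCw hQpos haT.1 hs.1 ih
    exact le_trans (le_trans (le_trans hgron hstep) halg) hchain
  have inv : ∀ i : Fin (k+1),
      ‖y i - x (t i)‖ ≤ L * C * w * (t i - t₀) * Real.exp (Q * (t i - t₀)) := by
    intro i
    induction i using Fin.induction with
    | zero => simp [ht0, hy0]
    | succ i ih =>
      have h := key i ih (t i.succ) ⟨(htm (Fin.castSucc_lt_succ (i := i))).le, le_rfl⟩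
      rw [hyrec i]
      exact h
  intro i s hs
  have h := key i (inv i.castSucc) s hs
  have hsT : s ∈ Icc t₀ T := (Icc_subset_Icc (htmem i.castSucc).1 (htmem i.succ).2) hs
  have h2 := hmono s hsT
  have h5 : 0 < min ε 1 := lt_min hε one_pos
  have h3 : min ε 1 / 2 < ε := by linarith [min_le_left ε 1]
  exact lt_of_le_of_lt (h.trans h2) h3
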